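/- Let f be a nonzero Laurent polynomial in n complex variables with zero set V_f = {z ∈ (ℂ*)^n : f(z) = 0}, and let 𝒜 = Log(V_f) ⊆ ℝ^n be its amoeba. Then every connected component of the complement ℝ^n \ 𝒜 is a convex set. -/

import Mathlib

open Polynomial Metric Set

namespace AmoebaFPT

variable {n : ℕ}

lemma zpow_sum' {w : ℂ} (hw : w ≠ 0) {ι : Type*} (s : Finset ι) (m : ι → ℤ) :
    w ^ (∑ i ∈ s, m i) = ∏ i ∈ s, w ^ m i := by
  classical
  induction s using Finset.induction with
  | empty => simp
  | insert _ _ h ih => rw [Finset.sum_insert h, Finset.prod_insert h, zpow_add₀ hw, ih]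

/-- the Laurent polynomial as a function -/
noncomputable def lf (A : Finset (Fin n → ℤ)) (a : (Fin n → ℤ) → ℂ) (z : Fin n → ℂ) : ℂ :=
  ∑ α ∈ A, a α * ∏ i, z i ^ (α i)

noncomputable def zeta (p θ : Fin n → ℝ) (j : Fin n) : ℂ :=
  Complex.exp (p j + θ j * Complex.I)

def dd (k α : Fin n → ℤ) : ℤ := ∑ i, k i * α i

def MM (A : Finset (Fin n → ℤ)) (k : Fin n → ℤ) : ℕ := A.sup fun α => (- dd k α).toNat

def ee (A : Finset (Fin n → ℤ)) (k α : Fin n → ℤ) : ℕ := (dd k α + MM A k).toNat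

/-- the one-variable polynomial slice -/
noncomputable def PP (A : Finset (Fin n → ℤ)) (a : (Fin n → ℤ) → ℂ) (k : Fin n → ℤ)
    (p θ : Fin n → ℝ) : Polynomial ℂ :=
  ∑ α ∈ A, Polynomial.C (a α * ∏ j, zeta p θ j ^ (α j)) * Polynomial.X ^ (ee A k α)

lemma zeta_ne_zero (p θ : Fin n → ℝ) (j : Fin n) : zeta p θ j ≠ 0 := Complex.exp_ne_zero _

lemma abs_zeta (p θ : Fin n → ℝ) (j : Fin n) : ‖zeta p θ j‖ = Real.exp (p j) := by
  rw [zeta, Complex.norm_exp]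
  norm_num

lemma ee_cast {A : Finset (Fin n → ℤ)} {k α : Fin n → ℤ} (hα : α ∈ A) :
    (ee A k α : ℤ) = dd k α + MM A k := by
  have h1 : (- dd k α).toNat ≤ MM A k := Finset.le_sup (f := fun α => (-dd k α).toNat) hα
  have h2 : (0:ℤ) ≤ dd k α + MM A k := by
    have := Int.self_le_toNat (- dd k α)
    omega
  rw [ee, Int.toNat_of_nonneg h2]

lemma eval_PP (A : Finset (Fin n → ℤ)) (a : (Fin n → ℤ) → ℂ) (k : Fin n → ℤ)
    (p θ : Fin n → ℝ) {w : ℂ} (hw : w ≠ 0) :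
    (PP A a k p θ).eval w = w ^ (MM A k) * lf A a (fun j => zeta p θ j * w ^ (k j)) := by
  rw [PP, lf, eval_finset_sum, Finset.mul_sum]
  refine Finset.sum_congr rfl fun α hα => ?_
  rw [eval_mul, eval_pow, eval_C, eval_X]
  have hprod : (∏ j, (zeta p θ j * w ^ (k j)) ^ (α j)) =
      (∏ j, zeta p θ j ^ (α j)) * w ^ (dd k α) := by
    rw [dd, zpow_sum' hw, ← Finset.prod_mul_distrib]
    refine Finset.prod_congr rfl fun j _ => ?_
    rw [mul_zpow, ← zpow_mul]
  have hpow : (w : ℂ) ^ (ee A k α) = w ^ (dd k α) * w ^ (MM A k : ℤ) := by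
    rw [← zpow_natCast w (ee A k α), ee_cast hα, zpow_add₀ hw]
  rw [hprod, hpow, zpow_natCast]
  ring

/-- modulus of the slice coordinates -/
lemma abs_slice (p θ : Fin n → ℝ) (k : Fin n → ℤ) {w : ℂ} (hw : w ≠ 0) (j : Fin n) :
    ‖zeta p θ j * w ^ (k j)‖ =
      Real.exp (p j + Real.log (‖w‖) * k j) := by
  have habs : (0:ℝ) < ‖w‖ := by
    simpa [norm_pos_iff] using hw
  rw [norm_mul, norm_zpow, abs_zeta, Real.exp_add]
  congr 1
  rw [← Real.rpow_intCast, Real.rpow_def_of_pos habs]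

/-- If the point `q + log R • k` is not covered by a zero of the Laurent polynomial, then
`PP` has no root of modulus `R`. -/
lemma noroot (A : Finset (Fin n → ℤ)) (a : (Fin n → ℤ) → ℂ) (k : Fin n → ℤ)
    (q θ : Fin n → ℝ) {R : ℝ} (hR : 0 < R)
    (h : ∀ z : Fin n → ℂ, (∀ i, z i ≠ 0) →
       (∀ i, Real.log (‖z i‖) = q i + Real.log R * k i) → lf A a z ≠ 0)
    {w : ℂ} (hw : ‖w‖ = R) : (PP A a k q θ).eval w ≠ 0 := by
  have hw0 : w ≠ 0 := by
    intro h0; rw [h0] at hw; simp at hw; exact absurd hw.symm hR.ne'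
  rw [eval_PP A a k q θ hw0]
  refine mul_ne_zero (pow_ne_zero _ hw0) ?_
  refine h _ (fun i => mul_ne_zero (zeta_ne_zero _ _ _) (zpow_ne_zero _ hw0)) fun i => ?_
  rw [abs_slice q θ k hw0 i, Real.log_exp, hw]

lemma root_exists (A : Finset (Fin n → ℤ)) (a : (Fin n → ℤ) → ℂ) (k : Fin n → ℤ)
    (q : Fin n → ℝ) (s : ℝ) (z : Fin n → ℂ)
    (hz0 : ∀ i, z i ≠ 0)
    (hlog : ∀ i, Real.log (‖z i‖) = q i + s * k i)
    (hzero : lf A a z = 0) :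
    (PP A a k q (fun i => (z i).arg)).eval ((Real.exp s : ℝ) : ℂ) = 0 := by
  have hw0 : ((Real.exp s : ℝ) : ℂ) ≠ 0 := by
    exact_mod_cast (Real.exp_pos s).ne'
  rw [eval_PP A a k _ _ hw0]
  have hz : (fun j => zeta q (fun i => (z i).arg) j * ((Real.exp s : ℝ) : ℂ) ^ (k j)) = z := by
    funext j
    have habs : ‖z j‖ = Real.exp (q j + s * k j) := by
      rw [← hlog j, Real.exp_log (norm_pos_iff.mpr (hz0 j))]
    have hz' : z j = ‖z j‖ * Complex.exp ((z j).arg * Complex.I) :=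
      (Complex.norm_mul_exp_arg_mul_I (z j)).symm
    rw [hz', habs, zeta, Complex.ofReal_exp, Complex.ofReal_exp, ← Complex.exp_int_mul,
      ← Complex.exp_add, ← Complex.exp_add]
    congr 1
    push_cast
    ring
  rw [hz, hzero, mul_zero]

lemma slice_shift (A : Finset (Fin n → ℤ)) (a : (Fin n → ℤ) → ℂ) (k : Fin n → ℤ)
    (q θ : Fin n → ℝ) (r : ℝ) {v : ℂ} (hv : v ≠ 0) :
    (PP A a k q θ).eval (((Real.exp r : ℝ) : ℂ) * v) =
      ((Real.exp r : ℝ) : ℂ) ^ (MM A k) *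
        (PP A a k (fun i => q i + r * k i) θ).eval v := by
  have hu0 : ((Real.exp r : ℝ) : ℂ) ≠ 0 := by exact_mod_cast (Real.exp_pos r).ne'
  rw [eval_PP A a k q θ (mul_ne_zero hu0 hv), eval_PP A a k _ θ hv, mul_pow, mul_assoc]
  have hfun : (fun j => zeta q θ j * (((Real.exp r : ℝ) : ℂ) * v) ^ k j) =
      (fun j => zeta (fun i => q i + r * k i) θ j * v ^ k j) := by
    funext j
    rw [mul_zpow, zeta, zeta, Complex.ofReal_exp, ← Complex.exp_int_mul, ← mul_assoc,
      ← Complex.exp_add]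
    congr 2
    push_cast
    ring
  rw [hfun]

lemma PP_comp (A : Finset (Fin n → ℤ)) (a : (Fin n → ℤ) → ℂ) (k : Fin n → ℤ)
    (q θ : Fin n → ℝ) (r : ℝ) :
    (PP A a k q θ).comp (Polynomial.C ((Real.exp r : ℝ) : ℂ) * Polynomial.X) =
      Polynomial.C (((Real.exp r : ℝ) : ℂ) ^ (MM A k)) *
        PP A a k (fun i => q i + r * k i) θ := by
  have hdense : Dense ({(0:ℂ)}ᶜ : Set ℂ) := dense_compl_singleton 0
  apply Polynomial.funext
  have h1 : Continuous fun v : ℂ =>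
      ((PP A a k q θ).comp (Polynomial.C ((Real.exp r : ℝ) : ℂ) * Polynomial.X)).eval v :=
    Polynomial.continuous _
  have h2 : Continuous fun v : ℂ =>
      (Polynomial.C (((Real.exp r : ℝ) : ℂ) ^ (MM A k)) *
        PP A a k (fun i => q i + r * k i) θ).eval v := Polynomial.continuous _
  have heq : Set.EqOn
      (fun v : ℂ => ((PP A a k q θ).comp (Polynomial.C ((Real.exp r : ℝ) : ℂ) * Polynomial.X)).eval v)
      (fun v : ℂ => (Polynomial.C (((Real.exp r : ℝ) : ℂ) ^ (MM A k)) *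
        PP A a k (fun i => q i + r * k i) θ).eval v) ({(0:ℂ)}ᶜ : Set ℂ) := by
    intro v hv
    have hv' : v ≠ 0 := hv
    simp only [Polynomial.eval_comp, Polynomial.eval_mul, Polynomial.eval_C, Polynomial.eval_X]
    rw [slice_shift A a k q θ r hv']
  intro v
  exact congrFun (Continuous.ext_on hdense h1 h2 heq) v

lemma PP_deriv_shift (A : Finset (Fin n → ℤ)) (a : (Fin n → ℤ) → ℂ) (k : Fin n → ℤ)
    (q θ : Fin n → ℝ) (r : ℝ) (v : ℂ) :
    ((Real.exp r : ℝ) : ℂ) * (PP A a k q θ).derivative.eval (((Real.exp r : ℝ) : ℂ) * v) =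
      ((Real.exp r : ℝ) : ℂ) ^ (MM A k) *
        (PP A a k (fun i => q i + r * k i) θ).derivative.eval v := by
  have h := congrArg Polynomial.derivative (PP_comp A a k q θ r)
  rw [Polynomial.derivative_comp, Polynomial.derivative_mul, Polynomial.derivative_C,
    zero_mul, zero_add, Polynomial.derivative_X, mul_one, Polynomial.derivative_mul,
    Polynomial.derivative_C, zero_mul, zero_add] at h
  have h2 := congrArg (Polynomial.eval v) h
  rw [Polynomial.eval_mul, Polynomial.eval_C, Polynomial.eval_comp, Polynomial.eval_mul,
    Polynomial.eval_C, Polynomial.eval_X, Polynomial.eval_mul, Polynomial.eval_C] at h2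
  exact h2

lemma integral_shift (A : Finset (Fin n → ℤ)) (a : (Fin n → ℤ) → ℂ) (k : Fin n → ℤ)
    (q θ : Fin n → ℝ) (r : ℝ) :
    (∮ w in C(0, Real.exp r),
        (PP A a k q θ).derivative.eval w / (PP A a k q θ).eval w) =
      ∮ v in C(0, 1), (PP A a k (fun i => q i + r * k i) θ).derivative.eval v /
          (PP A a k (fun i => q i + r * k i) θ).eval v := by
  have hu0 : ((Real.exp r : ℝ) : ℂ) ≠ 0 := by exact_mod_cast (Real.exp_pos r).ne'
  have huM : (((Real.exp r : ℝ) : ℂ)) ^ (MM A k) ≠ 0 := pow_ne_zero _ hu0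
  simp only [circleIntegral]
  apply intervalIntegral.integral_congr
  intro t _
  simp only [deriv_circleMap]
  have hv0 : circleMap 0 1 t ≠ 0 := by
    intro h
    have := congrArg (‖·‖) h
    simp [norm_circleMap_zero] at this
  set v := circleMap 0 1 t with hvdef
  have hcm : circleMap 0 (Real.exp r) t = ((Real.exp r : ℝ) : ℂ) * v := by
    simp [circleMap_zero, hvdef, mul_assoc]
  rw [hcm]
  have hnum := PP_deriv_shift A a k q θ r v
  have hden := slice_shift A a k q θ r hv0
  have hfrac : (PP A a k q θ).derivative.eval (((Real.exp r : ℝ) : ℂ) * v) /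
      (PP A a k q θ).eval (((Real.exp r : ℝ) : ℂ) * v) =
      (((Real.exp r : ℝ) : ℂ))⁻¹ *
        ((PP A a k (fun i => q i + r * k i) θ).derivative.eval v /
          (PP A a k (fun i => q i + r * k i) θ).eval v) := by
    have hnum' : (PP A a k q θ).derivative.eval (((Real.exp r : ℝ) : ℂ) * v) =
        (((Real.exp r : ℝ) : ℂ))⁻¹ * (((Real.exp r : ℝ) : ℂ) ^ (MM A k) *
          (PP A a k (fun i => q i + r * k i) θ).derivative.eval v) := by
      rw [← hnum]
      field_simp
    rw [hnum', hden, mul_div_assoc, mul_div_mul_left _ _ huM]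
  rw [hfrac]
  simp only [smul_eq_mul]
  have key : ∀ u b c : ℂ, u ≠ 0 → u * b * Complex.I * (u⁻¹ * c) = b * Complex.I * c := by
    intro u b c hu
    have : u * b * Complex.I * (u⁻¹ * c) = (u * u⁻¹) * (b * Complex.I * c) := by ring
    rw [this, mul_inv_cancel₀ hu, one_mul]
  exact key _ _ _ hu0

lemma circleIntegral_add' {f g : ℂ → ℂ} {c : ℂ} {R : ℝ}
    (hf : CircleIntegrable f c R) (hg : CircleIntegrable g c R) :
    (∮ z in C(c,R), (f z + g z)) = (∮ z in C(c,R), f z) + ∮ z in C(c,R), g z := by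
  simp only [circleIntegral, smul_add]
  exact intervalIntegral.integral_add hf.out hg.out

lemma derivative_eval_multiset (c : ℂ) (t : Multiset ℂ) (w : ℂ) (h : ∀ r ∈ t, w ≠ r) :
    (Polynomial.C c * (t.map (fun r => Polynomial.X - Polynomial.C r)).prod).derivative.eval w
      = (Polynomial.C c * (t.map (fun r => Polynomial.X - Polynomial.C r)).prod).eval w *
        (t.map (fun r => (w - r)⁻¹)).sum := by
  induction t using Multiset.induction with
  | empty => simp
  | cons r t ih =>
    have hr : w - r ≠ 0 := sub_ne_zero.mpr (h r (Multiset.mem_cons_self r t))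
    have ht : ∀ x ∈ t, w ≠ x := fun x hx => h x (Multiset.mem_cons_of_mem hx)
    simp only [Multiset.map_cons, Multiset.prod_cons, Multiset.sum_cons]
    have hre : Polynomial.C c * ((Polynomial.X - Polynomial.C r) *
        (t.map fun r => Polynomial.X - Polynomial.C r).prod) =
        (Polynomial.X - Polynomial.C r) *
          (Polynomial.C c * (t.map fun r => Polynomial.X - Polynomial.C r).prod) := by ring
    rw [hre, Polynomial.derivative_mul, Polynomial.derivative_sub, Polynomial.derivative_X,
      Polynomial.derivative_C, sub_zero, one_mul, Polynomial.eval_add, Polynomial.eval_mul,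
      Polynomial.eval_mul, Polynomial.eval_sub, Polynomial.eval_X, Polynomial.eval_C, ih ht]
    simp only [Polynomial.eval_mul, Polynomial.eval_sub, Polynomial.eval_X, Polynomial.eval_C]
    linear_combination (-(c * Polynomial.eval w (t.map fun r => Polynomial.X - Polynomial.C r).prod)) * mul_inv_cancel₀ hr

lemma continuousOn_msum (t : Multiset ℂ) (S : Set ℂ) (h : ∀ r ∈ t, ∀ w ∈ S, w ≠ r) :
    ContinuousOn (fun w => (t.map (fun r => (w - r)⁻¹)).sum) S := by
  induction t using Multiset.induction with
  | empty => simpa using continuousOn_const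
  | cons r t ih =>
    simp only [Multiset.map_cons, Multiset.sum_cons]
    exact ((continuousOn_id.sub continuousOn_const).inv₀ fun w hw =>
        sub_ne_zero.mpr (h r (Multiset.mem_cons_self r t) w hw)).add
      (ih fun x hx => h x (Multiset.mem_cons_of_mem hx))

lemma circleIntegral_multiset_sum (t : Multiset ℂ) (R : ℝ) (hR : 0 < R)
    (h : ∀ r ∈ t, ‖r‖ ≠ R) :
    (∮ w in C(0,R), (t.map (fun r => (w - r)⁻¹)).sum) =
      2 * Real.pi * Complex.I * ((t.filter (fun r => ‖r‖ < R)).card : ℕ) := by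
  classical
  induction t using Multiset.induction with
  | empty => simp [circleIntegral]
  | cons r t ih =>
    have hrt : ‖r‖ ≠ R := h r (Multiset.mem_cons_self r t)
    have hts : ∀ x ∈ t, ‖x‖ ≠ R := fun x hx => h x (Multiset.mem_cons_of_mem hx)
    have hcont1 : ContinuousOn (fun w : ℂ => (w - r)⁻¹) (sphere 0 R) := by
      refine (continuousOn_id.sub continuousOn_const).inv₀ fun w hw => sub_ne_zero.mpr ?_
      intro he
      rw [mem_sphere_zero_iff_norm] at hw
      exact hrt (by rw [← show w = r from he]; exact hw)
    have hcont2 : ContinuousOn (fun w : ℂ => (t.map (fun r => (w - r)⁻¹)).sum) (sphere 0 R) := by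
      refine continuousOn_msum t _ fun x hx w hw he => ?_
      rw [mem_sphere_zero_iff_norm] at hw
      exact hts x hx (by rw [← he]; exact hw)
    simp only [Multiset.map_cons, Multiset.sum_cons]
    rw [circleIntegral_add' (hcont1.circleIntegrable hR.le) (hcont2.circleIntegrable hR.le),
      ih hts]
    rcases lt_or_gt_of_ne hrt with hlt | hgt
    · rw [circleIntegral.integral_sub_inv_of_mem_ball (by rwa [mem_ball_zero_iff])]
      rw [Multiset.filter_cons_of_pos _ (by simpa using hlt), Multiset.card_cons]
      push_cast
      ring
    · have hz : (∮ w in C(0,R), (w - r)⁻¹) = 0 := by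
        refine Complex.circleIntegral_eq_zero_of_differentiable_on_off_countable hR.le
          Set.countable_empty ?_ ?_
        · refine (continuousOn_id.sub continuousOn_const).inv₀ fun w hw => sub_ne_zero.mpr ?_
          intro he
          simp only [id_eq] at he
          rw [mem_closedBall_zero_iff] at hw
          rw [he] at hw
          exact absurd hw (not_le.mpr hgt)
        · intro z hz
          refine ((differentiableAt_id.sub_const r).inv (sub_ne_zero.mpr ?_))
          intro he
          simp only [id_eq] at he
          rw [mem_diff, mem_ball_zero_iff] at hz
          rw [he] at hz
          exact absurd hz.1 (not_lt.mpr hgt.le)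
      rw [hz, Multiset.filter_cons_of_neg _ (by simpa using not_lt.mpr hgt.le)]
      ring

lemma count_integral (P : Polynomial ℂ) (R : ℝ) (hR : 0 < R)
    (h : ∀ w : ℂ, ‖w‖ = R → P.eval w ≠ 0) :
    (∮ w in C(0,R), P.derivative.eval w / P.eval w) =
      2 * Real.pi * Complex.I *
        ((P.roots.filter (fun r => ‖r‖ < R)).card : ℕ) := by
  have hsplits : Multiset.card P.roots = P.natDegree :=
    Polynomial.splits_iff_card_roots.mp (IsAlgClosed.splits P)
  have hfact := Polynomial.C_leadingCoeff_mul_prod_multiset_X_sub_C hsplits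
  have hroots_ne : ∀ r ∈ P.roots, ‖r‖ ≠ R := fun r hr he =>
    h r he (Polynomial.isRoot_of_mem_roots hr)
  have hcong : Set.EqOn (fun w => P.derivative.eval w / P.eval w)
      (fun w => (P.roots.map (fun r => (w - r)⁻¹)).sum) (sphere 0 R) := by
    intro w hw
    rw [mem_sphere_zero_iff_norm] at hw
    have hwne : ∀ r ∈ P.roots, w ≠ r := by
      intro r hr he
      exact h w hw (by rw [he]; exact Polynomial.isRoot_of_mem_roots hr)
    have hd := derivative_eval_multiset P.leadingCoeff P.roots w hwne
    rw [hfact] at hd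
    simp only
    rw [hd]
    exact mul_div_cancel_left₀ _ (h w hw)
  rw [circleIntegral.integral_congr hR.le hcong, circleIntegral_multiset_sum _ R hR hroots_ne]

lemma zeta_pow (p θ : Fin n → ℝ) (j : Fin n) (m : ℤ) :
    zeta p θ j ^ m = Complex.exp ((m : ℂ) * ((p j : ℂ) + (θ j : ℂ) * Complex.I)) := by
  rw [zeta, Complex.exp_int_mul]

lemma continuous_PP_eval (A : Finset (Fin n → ℤ)) (a : (Fin n → ℤ) → ℂ) (k : Fin n → ℤ) :
    Continuous (fun x : ((Fin n → ℝ) × (Fin n → ℝ)) × ℂ =>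
      (PP A a k x.1.1 x.1.2).eval x.2) := by
  have hrw : (fun x : ((Fin n → ℝ) × (Fin n → ℝ)) × ℂ => (PP A a k x.1.1 x.1.2).eval x.2) =
      fun x => ∑ α ∈ A, (a α * ∏ j, Complex.exp ((α j : ℂ) *
        ((x.1.1 j : ℂ) + (x.1.2 j : ℂ) * Complex.I))) * x.2 ^ (ee A k α) := by
    funext x
    rw [PP, Polynomial.eval_finset_sum]
    refine Finset.sum_congr rfl fun α hα => ?_
    rw [Polynomial.eval_mul, Polynomial.eval_pow, Polynomial.eval_C, Polynomial.eval_X]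
    congr 2
    exact Finset.prod_congr rfl fun j _ => zeta_pow _ _ j (α j)
  rw [hrw]
  refine continuous_finset_sum _ fun α _ => Continuous.mul (Continuous.mul continuous_const ?_)
    (Continuous.pow (continuous_snd) _)
  refine continuous_finset_prod _ fun j _ => Complex.continuous_exp.comp ?_
  refine Continuous.mul continuous_const ?_
  refine Continuous.add ?_ (Continuous.mul ?_ continuous_const)
  · exact Complex.continuous_ofReal.comp ((continuous_apply j).comp
      (continuous_fst.comp continuous_fst))
  · exact Complex.continuous_ofReal.comp ((continuous_apply j).comp
      (continuous_snd.comp continuous_fst))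

lemma continuous_PP_deval (A : Finset (Fin n → ℤ)) (a : (Fin n → ℤ) → ℂ) (k : Fin n → ℤ) :
    Continuous (fun x : ((Fin n → ℝ) × (Fin n → ℝ)) × ℂ =>
      (PP A a k x.1.1 x.1.2).derivative.eval x.2) := by
  have hrw : (fun x : ((Fin n → ℝ) × (Fin n → ℝ)) × ℂ =>
      (PP A a k x.1.1 x.1.2).derivative.eval x.2) =
      fun x => ∑ α ∈ A, ((a α * ∏ j, Complex.exp ((α j : ℂ) *
        ((x.1.1 j : ℂ) + (x.1.2 j : ℂ) * Complex.I))) * (ee A k α)) *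
          x.2 ^ (ee A k α - 1) := by
    funext x
    rw [PP, Polynomial.derivative_sum, Polynomial.eval_finset_sum]
    refine Finset.sum_congr rfl fun α hα => ?_
    rw [Polynomial.derivative_C_mul_X_pow, Polynomial.eval_mul, Polynomial.eval_pow,
      Polynomial.eval_C, Polynomial.eval_X]
    congr 3
    exact Finset.prod_congr rfl fun j _ => zeta_pow _ _ j (α j)
  rw [hrw]
  refine continuous_finset_sum _ fun α _ => Continuous.mul (Continuous.mul ?_ continuous_const)
    (Continuous.pow (continuous_snd) _)
  refine Continuous.mul continuous_const ?_
  refine continuous_finset_prod _ fun j _ => Complex.continuous_exp.comp ?_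
  refine Continuous.mul continuous_const ?_
  refine Continuous.add ?_ (Continuous.mul ?_ continuous_const)
  · exact Complex.continuous_ofReal.comp ((continuous_apply j).comp
      (continuous_fst.comp continuous_fst))
  · exact Complex.continuous_ofReal.comp ((continuous_apply j).comp
      (continuous_snd.comp continuous_fst))

lemma continuousAt_PP_integral (A : Finset (Fin n → ℤ)) (a : (Fin n → ℤ) → ℂ) (k : Fin n → ℤ)
    (R : ℝ) (hR : 0 < R) (x₀ : (Fin n → ℝ) × (Fin n → ℝ))
    (h0 : ∀ w : ℂ, ‖w‖ = R → (PP A a k x₀.1 x₀.2).eval w ≠ 0) :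
    ContinuousAt (fun x : (Fin n → ℝ) × (Fin n → ℝ) =>
      ∮ w in C(0,R), (PP A a k x.1 x.2).derivative.eval w / (PP A a k x.1 x.2).eval w) x₀ := by
  set F : ((Fin n → ℝ) × (Fin n → ℝ)) → ℝ → ℂ := fun x t =>
    (circleMap 0 R t * Complex.I) *
      ((PP A a k x.1 x.2).derivative.eval (circleMap 0 R t) /
        (PP A a k x.1 x.2).eval (circleMap 0 R t)) with hF
  have habs : ∀ t : ℝ, ‖circleMap 0 R t‖ = R := by
    intro t; rw [norm_circleMap_zero, abs_of_pos hR]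
  have hgoal : (fun x : (Fin n → ℝ) × (Fin n → ℝ) =>
      ∮ w in C(0,R), (PP A a k x.1 x.2).derivative.eval w / (PP A a k x.1 x.2).eval w) =
      fun x => ∫ t in (0:ℝ)..(2*Real.pi), F x t := by
    funext x
    simp only [circleIntegral, deriv_circleMap, smul_eq_mul, hF]
  rw [hgoal]
  have hFc : ∀ t : ℝ, ContinuousAt (fun q : ((Fin n → ℝ) × (Fin n → ℝ)) × ℝ =>
      F q.1 q.2) (x₀, t) := by
    intro t
    have hden : (PP A a k x₀.1 x₀.2).eval (circleMap 0 R t) ≠ 0 := h0 _ (habs t)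
    refine ContinuousAt.mul ?_ (ContinuousAt.div ?_ ?_ hden)
    · exact (((continuous_circleMap 0 R).comp continuous_snd).mul continuous_const).continuousAt
    · exact ((continuous_PP_deval A a k).comp (continuous_fst.prodMk
        ((continuous_circleMap 0 R).comp continuous_snd))).continuousAt
    · exact ((continuous_PP_eval A a k).comp (continuous_fst.prodMk
        ((continuous_circleMap 0 R).comp continuous_snd))).continuousAt
  have hFx₀ : Continuous fun t : ℝ => F x₀ t := by
    rw [continuous_iff_continuousAt]
    intro t
    exact (hFc t).comp (continuous_const.prodMk continuous_id).continuousAt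
  obtain ⟨t₀, ht₀, hmax'⟩ := isCompact_Icc.exists_isMaxOn
    (Set.nonempty_Icc.mpr (by positivity)) (hFx₀.norm.continuousOn
      (s := Icc (0:ℝ) (2*Real.pi)))
  have hmax : ∀ t ∈ Icc (0:ℝ) (2*Real.pi), ‖F x₀ t‖ ≤ ‖F x₀ t₀‖ := fun t ht => hmax' ht
  set B := ‖F x₀ t₀‖ + 1 with hB
  have hept : ∀ t ∈ Icc (0:ℝ) (2*Real.pi),
      ∀ᶠ q : ((Fin n → ℝ) × (Fin n → ℝ)) × ℝ in nhds (x₀, t), ‖F q.1 q.2‖ ≤ B := by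
    intro t ht
    have h1 : ‖F x₀ t‖ < B := lt_of_le_of_lt (hmax t ht) (lt_add_one _)
    exact ((hFc t).norm.eventually_lt_const h1).mono fun _ h => h.le
  have hbound : ∀ᶠ x in nhds x₀, ∀ t ∈ Icc (0:ℝ) (2*Real.pi), ‖F x t‖ ≤ B :=
    isCompact_Icc.eventually_forall_of_forall_eventually hept
  refine intervalIntegral.continuousAt_of_dominated_interval (bound := fun _ => B) ?_ ?_ ?_ ?_
  · filter_upwards with x
    have hmeas : Measurable (F x) := by
      apply Measurable.mul
      · exact ((continuous_circleMap 0 R).mul continuous_const).measurable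
      · apply Measurable.div
        · exact (((continuous_PP_deval A a k).comp ((continuous_const (y := x)).prodMk
            (continuous_circleMap 0 R))).measurable)
        · exact (((continuous_PP_eval A a k).comp ((continuous_const (y := x)).prodMk
            (continuous_circleMap 0 R))).measurable)
    exact hmeas.aestronglyMeasurable
  · filter_upwards [hbound] with x hx
    filter_upwards with t ht
    refine hx t ?_
    have : Set.uIoc (0:ℝ) (2*Real.pi) = Set.Ioc 0 (2*Real.pi) := Set.uIoc_of_le (by positivity)
    rw [this] at ht
    exact ⟨ht.1.le, ht.2⟩
  · exact intervalIntegrable_const (c := B)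
  · filter_upwards with t ht
    exact (hFc t).comp (f := fun x : (Fin n → ℝ) × (Fin n → ℝ) => (x, t))
      (continuous_id.prodMk continuous_const).continuousAt

lemma two_pi_I_ne_zero' : (2 * Real.pi * Complex.I : ℂ) ≠ 0 := by
  simp [Real.pi_ne_zero, Complex.I_ne_zero]

lemma const_on_preconnected {X : Type*} [TopologicalSpace X] {S : Set X} (hS : IsPreconnected S)
    {g : X → ℂ} (hg : ∀ x ∈ S, ContinuousAt g x) {m : X → ℕ}
    (hm : ∀ x ∈ S, g x = 2 * Real.pi * Complex.I * (m x : ℂ))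
    {x y : X} (hx : x ∈ S) (hy : y ∈ S) : m x = m y := by
  set u : X → ℝ := fun x => (g x / (2 * Real.pi * Complex.I)).re with hu
  have hum : ∀ x ∈ S, u x = (m x : ℝ) := by
    intro x hx
    rw [hu]
    simp only
    rw [hm x hx, mul_div_cancel_left₀ _ two_pi_I_ne_zero']
    exact Complex.natCast_re _
  have hucont : ContinuousOn u S := by
    intro x hx
    exact (Complex.continuous_re.continuousAt.comp ((hg x hx).div continuousAt_const
      two_pi_I_ne_zero')).continuousWithinAt
  have hIm : IsPreconnected (u '' S) := hS.image u hucont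
  have key : ∀ x ∈ S, ∀ y ∈ S, ¬ (m x < m y) := by
    intro x hx y hy hlt
    have hc : (m x : ℝ) + 1/2 ∈ Set.Icc (u x) (u y) := by
      rw [hum x hx, hum y hy]
      constructor
      · linarith
      · have : (m x : ℝ) + 1 ≤ (m y : ℝ) := by exact_mod_cast hlt
        linarith
    obtain ⟨z, hz, huz⟩ := hIm.Icc_subset (Set.mem_image_of_mem u hx)
      (Set.mem_image_of_mem u hy) hc
    rw [hum z hz] at huz
    have h2 : ((2 * m z : ℕ) : ℝ) = ((2 * m x + 1 : ℕ) : ℝ) := by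
      push_cast
      linarith
    have := Nat.cast_inj (R := ℝ).mp h2
    omega
  exact le_antisymm (not_lt.mp (key y hy x hx)) (not_lt.mp (key x hx y hy))

noncomputable def NN (A : Finset (Fin n → ℤ)) (a : (Fin n → ℤ) → ℂ) (k : Fin n → ℤ)
    (q θ : Fin n → ℝ) (R : ℝ) : ℕ :=
  Multiset.card ((PP A a k q θ).roots.filter (fun ρ => ‖ρ‖ < R))

set_option maxHeartbeats 2000000 in
lemma segment_in_complement (A : Finset (Fin n → ℤ)) (a : (Fin n → ℤ) → ℂ)
    (amoeba : Set (Fin n → ℝ))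
    (hCompl : ∀ q : Fin n → ℝ, q ∉ amoeba → ∀ z : Fin n → ℂ, (∀ i, z i ≠ 0) →
      (∀ i, Real.log (‖z i‖) = q i) → lf A a z ≠ 0)
    (hMem : ∀ q : Fin n → ℝ, q ∈ amoeba → ∃ z : Fin n → ℂ, (∀ i, z i ≠ 0) ∧
      (∀ i, Real.log (‖z i‖) = q i) ∧ lf A a z = 0)
    (x : Fin n → ℝ) (hx : x ∉ amoeba) (k : Fin n → ℤ) (r : ℝ)
    (hy : (fun i => x i + r * k i) ∈ connectedComponentIn amoebaᶜ x) :
    ∀ s ∈ Set.Icc (0:ℝ) r, (fun i => x i + s * k i) ∉ amoeba := by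
  have hxE : x ∈ connectedComponentIn amoebaᶜ x := mem_connectedComponentIn hx
  have hEsub : connectedComponentIn amoebaᶜ x ⊆ amoebaᶜ := connectedComponentIn_subset _ _
  have hy' : (fun i => x i + r * k i) ∉ amoeba := hEsub hy
  have claim1 : ∀ (q θ : Fin n → ℝ) (R : ℝ), 0 < R →
      (fun i => q i + Real.log R * k i) ∉ amoeba →
      ∀ w : ℂ, ‖w‖ = R → (PP A a k q θ).eval w ≠ 0 := by
    intro q θ R hR hq w hw
    exact noroot A a k q θ hR (fun z hz hlog => hCompl _ hq z hz hlog) hw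
  have hone : ∀ q : Fin n → ℝ, (fun i => q i + Real.log 1 * k i) = q := by
    intro q; funext i; simp [Real.log_one]
  have claim2 : ∀ (q θ : Fin n → ℝ) (R : ℝ), 0 < R →
      (fun i => q i + Real.log R * k i) ∉ amoeba →
      (∮ w in C(0,R), (PP A a k q θ).derivative.eval w / (PP A a k q θ).eval w) =
        2 * Real.pi * Complex.I * (NN A a k q θ R : ℂ) := fun q θ R hR hq =>
    count_integral _ R hR (claim1 q θ R hR hq)
  have claim3 : ∀ (q : Fin n → ℝ) (R : ℝ), 0 < R →
      (fun i => q i + Real.log R * k i) ∉ amoeba →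
      ∀ θ θ' : Fin n → ℝ, NN A a k q θ R = NN A a k q θ' R := by
    intro q R hR hq θ θ'
    refine const_on_preconnected (S := (Set.univ : Set (Fin n → ℝ))) isPreconnected_univ
      (g := fun θ => ∮ w in C(0,R),
        (PP A a k q θ).derivative.eval w / (PP A a k q θ).eval w)
      (fun θ _ => ?_) (m := fun θ => NN A a k q θ R)
      (fun θ _ => claim2 q θ R hR hq) (Set.mem_univ θ) (Set.mem_univ θ')
    exact (continuousAt_PP_integral A a k R hR (q, θ) (claim1 q θ R hR hq)).comp
      ((continuous_const.prodMk continuous_id).continuousAt)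
  have claim4 : ∀ q ∈ connectedComponentIn amoebaᶜ x, ∀ q' ∈ connectedComponentIn amoebaᶜ x,
      NN A a k q 0 1 = NN A a k q' 0 1 := by
    intro q hq q' hq'
    refine const_on_preconnected (S := connectedComponentIn amoebaᶜ x)
      isPreconnected_connectedComponentIn
      (g := fun q => ∮ w in C(0,1),
        (PP A a k q 0).derivative.eval w / (PP A a k q 0).eval w)
      (fun q hq => ?_) (m := fun q => NN A a k q 0 1)
      (fun q hq => claim2 q 0 1 one_pos (by rw [hone q]; exact hEsub hq)) hq hq'
    exact (continuousAt_PP_integral A a k 1 one_pos (q, 0)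
      (claim1 q 0 1 one_pos (by rw [hone q]; exact hEsub hq))).comp
      (f := fun q' : Fin n → ℝ => (q', (0 : Fin n → ℝ)))
      ((continuous_id.prodMk continuous_const).continuousAt)
  have hxr : (fun i => x i + Real.log (Real.exp r) * k i) ∉ amoeba := by
    have heq : (fun i => x i + Real.log (Real.exp r) * k i) = (fun i => x i + r * k i) := by
      funext i; rw [Real.log_exp]
    rw [heq]; exact hy'
  have claim5 : ∀ θ : Fin n → ℝ,
      NN A a k x θ (Real.exp r) = NN A a k (fun i => x i + r * k i) θ 1 := by
    intro θ
    have h2int := claim2 x θ (Real.exp r) (Real.exp_pos r) hxr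
    have h3 : (fun i => (x i + r * k i) + Real.log 1 * k i) ∉ amoeba := by
      rw [hone]; exact hy'
    have h4int := claim2 (fun i => x i + r * k i) θ 1 one_pos h3
    have hshift := integral_shift A a k x θ r
    rw [h2int, h4int] at hshift
    have := mul_left_cancel₀ two_pi_I_ne_zero' hshift
    exact_mod_cast this
  intro s hs hmem
  obtain ⟨z, hz0, hzlog, hzzero⟩ := hMem _ hmem
  have hroot := root_exists A a k x s z hz0 (fun i => hzlog i) hzzero
  have habsw : ‖((Real.exp s : ℝ) : ℂ)‖ = Real.exp s := by
    rw [Complex.norm_real, Real.norm_eq_abs, abs_of_pos (Real.exp_pos s)]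
  have hx1 : (fun i => x i + Real.log 1 * k i) ∉ amoeba := by rw [hone]; exact hx
  rcases eq_or_lt_of_le hs.1 with h0 | hspos
  · exact claim1 x (fun i => (z i).arg) 1 one_pos hx1 _
      (by rw [habsw, ← h0, Real.exp_zero]) hroot
  · rcases eq_or_lt_of_le hs.2 with hr0 | hslt
    · exact claim1 x (fun i => (z i).arg) (Real.exp r) (Real.exp_pos r) hxr _
        (by rw [habsw, hr0]) hroot
    · have hrpos : (0:ℝ) < r := lt_trans hspos hslt
      have hP0 : PP A a k x (fun i => (z i).arg) ≠ 0 := by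
        intro h0'
        refine claim1 x (fun i => (z i).arg) 1 one_pos hx1 1 (by simp) ?_
        rw [h0']
        simp
      have hwin : ((Real.exp s : ℝ) : ℂ) ∈ (PP A a k x (fun i => (z i).arg)).roots :=
        Polynomial.mem_roots'.mpr ⟨hP0, hroot⟩
      have hle : (PP A a k x (fun i => (z i).arg)).roots.filter (fun ρ => ‖ρ‖ < 1) ≤
          (PP A a k x (fun i => (z i).arg)).roots.filter
            (fun ρ => ‖ρ‖ < Real.exp r) := by
        refine Multiset.monotone_filter_right _ ?_
        intro ρ hρ
        refine lt_trans hρ ?_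
        calc (1:ℝ) = Real.exp 0 := Real.exp_zero.symm
          _ < Real.exp r := Real.exp_lt_exp.mpr hrpos
      have hmem2 : ((Real.exp s : ℝ) : ℂ) ∈ (PP A a k x (fun i => (z i).arg)).roots.filter
          (fun ρ => ‖ρ‖ < Real.exp r) := by
        rw [Multiset.mem_filter]
        exact ⟨hwin, by rw [habsw]; exact Real.exp_lt_exp.mpr hslt⟩
      have hnot1 : ((Real.exp s : ℝ) : ℂ) ∉ (PP A a k x (fun i => (z i).arg)).roots.filter
          (fun ρ => ‖ρ‖ < 1) := by
        rw [Multiset.mem_filter]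
        rintro ⟨-, habs⟩
        rw [habsw] at habs
        have : (1:ℝ) < Real.exp s := by
          calc (1:ℝ) = Real.exp 0 := Real.exp_zero.symm
            _ < Real.exp s := Real.exp_lt_exp.mpr hspos
        linarith
      have hlt : (PP A a k x (fun i => (z i).arg)).roots.filter (fun ρ => ‖ρ‖ < 1) <
          (PP A a k x (fun i => (z i).arg)).roots.filter
            (fun ρ => ‖ρ‖ < Real.exp r) :=
        lt_of_le_of_ne hle (fun he => hnot1 (he ▸ hmem2))
      have hcard : NN A a k x (fun i => (z i).arg) 1 <
          NN A a k x (fun i => (z i).arg) (Real.exp r) := Multiset.card_lt_card hlt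
      have heqc : NN A a k x (fun i => (z i).arg) (Real.exp r) =
          NN A a k x (fun i => (z i).arg) 1 := by
        have h3 : (fun i => (x i + r * k i) + Real.log 1 * k i) ∉ amoeba := by
          rw [hone]; exact hy'
        calc NN A a k x (fun i => (z i).arg) (Real.exp r)
            = NN A a k (fun i => x i + r * k i) (fun i => (z i).arg) 1 :=
              claim5 (fun i => (z i).arg)
          _ = NN A a k (fun i => x i + r * k i) 0 1 :=
              claim3 (fun i => x i + r * k i) 1 one_pos h3 (fun i => (z i).arg) 0
          _ = NN A a k x 0 1 := claim4 _ hy _ hxE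
          _ = NN A a k x (fun i => (z i).arg) 1 := claim3 x 1 one_pos hx1 0 _
      omega

lemma amoeba_isClosed (A : Finset (Fin n → ℤ)) (a : (Fin n → ℤ) → ℂ) :
    IsClosed {q : Fin n → ℝ | ∃ z : Fin n → ℂ, (∀ i, z i ≠ 0) ∧
      (∀ i, Real.log (‖z i‖) = q i) ∧ lf A a z = 0} := by
  refine IsSeqClosed.isClosed ?_
  intro u p hu hup
  choose z hz0 hzlog hzzero using hu
  obtain ⟨N, hN⟩ := Metric.tendsto_atTop.mp hup 1 one_pos
  set C : ℝ := Real.exp (‖p‖ + 1) with hC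
  have habs_eq : ∀ m i, ‖z m i‖ = Real.exp (u m i) := by
    intro m i
    rw [← hzlog m i, Real.exp_log (norm_pos_iff.mpr (hz0 m i))]
  have hwball : ∀ m, z (N + m) ∈ Metric.closedBall (0 : Fin n → ℂ) C := by
    intro m
    rw [Metric.mem_closedBall, dist_zero_right,
      pi_norm_le_iff_of_nonneg (Real.exp_nonneg _)]
    intro i
    rw [habs_eq]
    apply Real.exp_le_exp.mpr
    have h1 : dist (u (N + m)) p < 1 := hN (N + m) (Nat.le_add_right N m)
    have h2 : ‖u (N + m) - p‖ < 1 := by rwa [← dist_eq_norm]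
    have h3 : |u (N + m) i - p i| ≤ ‖u (N + m) - p‖ := by
      have := norm_le_pi_norm (u (N + m) - p) i
      simpa using this
    have h4 : |p i| ≤ ‖p‖ := by
      have := norm_le_pi_norm p i
      simpa using this
    have h5 := (abs_le.mp h3).2
    have h6 := (le_abs_self (p i)).trans h4
    linarith
  obtain ⟨zlim, hzlim_mem, φ, hφmono, hφtend⟩ :=
    (isCompact_closedBall (0 : Fin n → ℂ) C).tendsto_subseq hwball
  have hidx : Filter.Tendsto (fun m => N + φ m) Filter.atTop Filter.atTop := by
    apply Filter.tendsto_atTop_mono (fun m => (hφmono.le_apply).trans (Nat.le_add_left _ _))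
    exact Filter.tendsto_id
  have hu' : Filter.Tendsto (fun m => u (N + φ m)) Filter.atTop (nhds p) := hup.comp hidx
  have hcoord : ∀ i, Filter.Tendsto (fun m => z (N + φ m) i) Filter.atTop (nhds (zlim i)) :=
    fun i => ((continuous_apply i).tendsto zlim).comp hφtend
  have habs_lim : ∀ i, ‖zlim i‖ = Real.exp (p i) := by
    intro i
    have h1 : Filter.Tendsto (fun m => ‖z (N + φ m) i‖) Filter.atTop
        (nhds (‖zlim i‖)) := (continuous_norm.tendsto _).comp (hcoord i)
    have h2 : Filter.Tendsto (fun m => ‖z (N + φ m) i‖) Filter.atTop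
        (nhds (Real.exp (p i))) := by
      have h3 : Filter.Tendsto (fun m => u (N + φ m) i) Filter.atTop (nhds (p i)) :=
        ((continuous_apply i).tendsto p).comp hu'
      have h4 := (Real.continuous_exp.tendsto _).comp h3
      exact h4.congr fun m => (habs_eq _ i).symm
    exact tendsto_nhds_unique h1 h2
  have hzlim0 : ∀ i, zlim i ≠ 0 := by
    intro i h0
    have h5 := habs_lim i
    rw [h0] at h5
    simp at h5
    exact absurd h5.symm (Real.exp_pos (p i)).ne'
  have hlf : lf A a zlim = 0 := by
    have hterm : Filter.Tendsto (fun m => lf A a (z (N + φ m))) Filter.atTop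
        (nhds (lf A a zlim)) := by
      unfold lf
      apply tendsto_finset_sum
      intro α _
      apply Filter.Tendsto.const_mul
      apply tendsto_finset_prod
      intro i _
      exact ((continuousAt_zpow₀ (zlim i) (α i) (Or.inl (hzlim0 i))).tendsto).comp (hcoord i)
    have hconst : Filter.Tendsto (fun m => lf A a (z (N + φ m))) Filter.atTop (nhds 0) :=
      Filter.Tendsto.congr (fun m => (hzzero (N + φ m)).symm) tendsto_const_nhds
    exact tendsto_nhds_unique hterm hconst
  exact ⟨zlim, hzlim0, fun i => by rw [habs_lim i, Real.log_exp], hlf⟩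

lemma convex_of_segments {S : Set (Fin n → ℝ)} (hS : IsOpen S)
    (H : ∀ x ∈ S, ∀ (k : Fin n → ℤ) (r : ℝ), 0 ≤ r → (fun i => x i + r * k i) ∈ S →
      ∀ s ∈ Set.Icc (0:ℝ) r, (fun i => x i + s * k i) ∈ S) :
    Convex ℝ S := by
  intro x hx y hy b c hb hc hbc
  have hc1 : c ≤ 1 := by linarith
  obtain ⟨εx, hεx, hbx⟩ := Metric.isOpen_iff.mp hS x hx
  obtain ⟨εy, hεy, hby⟩ := Metric.isOpen_iff.mp hS y hy
  set ε := min εx εy with hε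
  have hε0 : 0 < ε := lt_min hεx hεy
  obtain ⟨N₀, hN₀⟩ := exists_nat_one_div_lt hε0
  set N : ℕ := N₀ + 1 with hNdef
  have hNpos : (0:ℝ) < N := by positivity
  set d : Fin n → ℝ := fun i => y i - x i with hd
  set k : Fin n → ℤ := fun i => round ((N:ℝ) * d i) with hk
  set r : ℝ := (N:ℝ)⁻¹ with hr
  have hr0 : 0 ≤ r := by positivity
  have happrox : ∀ i, |r * k i - d i| ≤ 1 / (2*N) := by
    intro i
    have h1 : |(N:ℝ) * d i - round ((N:ℝ) * d i)| ≤ 1/2 := abs_sub_round _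
    have h2 : |(k i : ℝ) - (N:ℝ) * d i| ≤ 1/2 := by
      rw [hk, abs_sub_comm]
      exact h1
    have h3 : r * (k i : ℝ) - d i = r * ((k i : ℝ) - (N:ℝ) * d i) := by
      rw [hr]
      field_simp
    rw [h3, abs_mul, abs_of_nonneg hr0]
    calc r * |(k i:ℝ) - (N:ℝ) * d i| ≤ r * (1/2) :=
          mul_le_mul_of_nonneg_left h2 hr0
      _ = 1 / (2*N) := by rw [hr]; ring
  have hsmall : 1/(2*(N:ℝ)) < ε := by
    have h2 : 1/(2*(N:ℝ)) ≤ 1/((N₀:ℝ)+1) := by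
      apply one_div_le_one_div_of_le (by positivity)
      rw [hNdef]
      push_cast
      linarith
    linarith
  set x' : Fin n → ℝ := fun i => x i + c * (d i - r * k i) with hx'
  have hdistx : ∀ i, |x' i - x i| ≤ 1/(2*(N:ℝ)) := by
    intro i
    rw [hx']
    simp only [add_sub_cancel_left]
    rw [abs_mul, abs_of_nonneg hc]
    calc c * |d i - r * k i| ≤ 1 * (1/(2*(N:ℝ))) := by
          apply mul_le_mul hc1 (by rw [abs_sub_comm]; exact happrox i)
            (abs_nonneg _) zero_le_one
      _ = 1/(2*(N:ℝ)) := one_mul _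
  have hx'S : x' ∈ S := by
    apply hbx
    rw [Metric.mem_ball]
    refine lt_of_le_of_lt ((dist_pi_le_iff (by positivity)).mpr fun i => ?_)
      (lt_of_lt_of_le hsmall (min_le_left _ _))
    rw [Real.dist_eq]
    exact hdistx i
  have hyS : (fun i => x' i + r * k i) ∈ S := by
    apply hby
    rw [Metric.mem_ball]
    refine lt_of_le_of_lt ((dist_pi_le_iff (by positivity)).mpr fun i => ?_)
      (lt_of_lt_of_le hsmall (min_le_right _ _))
    rw [Real.dist_eq]
    have hcomp : x' i + r * k i - y i = (1 - c) * (r * k i - d i) := by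
      rw [hx', hd]
      ring
    rw [hcomp, abs_mul, abs_of_nonneg (by linarith : (0:ℝ) ≤ 1 - c)]
    calc (1-c) * |r * k i - d i| ≤ 1 * (1/(2*(N:ℝ))) := by
          apply mul_le_mul (by linarith) (happrox i) (abs_nonneg _) zero_le_one
      _ = 1/(2*(N:ℝ)) := one_mul _
  have hmid := H x' hx'S k r hr0 hyS (c * r)
    ⟨mul_nonneg hc hr0, mul_le_of_le_one_left hr0 hc1⟩
  have hfinal : b • x + c • y = fun i => x' i + (c * r) * k i := by
    funext i
    have hb1 : b = 1 - c := by linarith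
    simp only [Pi.add_apply, Pi.smul_apply, smul_eq_mul, hx', hd, hb1]
    ring
  rw [hfinal]
  exact hmid

end AmoebaFPT

open AmoebaFPT in
/-- Forsberg–Passare–Tsikh (convexity part): every connected component of the complement
of the amoeba of a complex algebraic hypersurface (zero set of a nonzero Laurent
polynomial in `(ℂ*)ⁿ`) is convex. -/
theorem amoeba_complement_components_convex
    (n : ℕ) (A : Finset (Fin n → ℤ)) (hA : A.Nonempty)
    (a : (Fin n → ℤ) → ℂ) (ha : ∀ α ∈ A, a α ≠ 0)
    (V : Set (Fin n → ℂ))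
    (hV : V = {z | (∀ i, z i ≠ 0) ∧ ∑ α ∈ A, a α * ∏ i, z i ^ (α i) = 0})
    (amoeba : Set (Fin n → ℝ))
    (hamoeba : amoeba = (fun z : Fin n → ℂ => fun i => Real.log (‖z i‖)) '' V) :
    ∀ x ∈ amoebaᶜ, Convex ℝ (connectedComponentIn amoebaᶜ x) := by
  have hMemIff : ∀ q : Fin n → ℝ, q ∈ amoeba ↔ ∃ z : Fin n → ℂ, (∀ i, z i ≠ 0) ∧
      (∀ i, Real.log (‖z i‖) = q i) ∧ lf A a z = 0 := by
    intro q
    rw [hamoeba, hV]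
    constructor
    · rintro ⟨z, hzV, rfl⟩
      exact ⟨z, hzV.1, fun i => rfl, hzV.2⟩
    · rintro ⟨z, hz0, hlog, hzf⟩
      exact ⟨z, ⟨hz0, hzf⟩, funext hlog⟩
  have hamoeba_eq : amoeba = {q : Fin n → ℝ | ∃ z : Fin n → ℂ, (∀ i, z i ≠ 0) ∧
      (∀ i, Real.log (‖z i‖) = q i) ∧ lf A a z = 0} := Set.ext hMemIff
  have hclosed : IsClosed amoeba := by rw [hamoeba_eq]; exact amoeba_isClosed A a
  intro x hx
  have hEopen : IsOpen (connectedComponentIn amoebaᶜ x) :=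
    hclosed.isOpen_compl.connectedComponentIn
  apply convex_of_segments hEopen
  intro q hq k r hr hend
  have hq' : q ∉ amoeba := connectedComponentIn_subset _ _ hq
  have hEq : connectedComponentIn amoebaᶜ q = connectedComponentIn amoebaᶜ x :=
    (connectedComponentIn_eq hq).symm
  have hend' : (fun i => q i + r * k i) ∈ connectedComponentIn amoebaᶜ q := by
    rw [hEq]; exact hend
  have hseg : ∀ s ∈ Set.Icc (0:ℝ) r, (fun i => q i + s * k i) ∉ amoeba := by
    refine segment_in_complement A a amoeba ?_ ?_ q hq' k r hend'
    · intro p hp z hz0 hlog hlf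
      exact hp ((hMemIff p).mpr ⟨z, hz0, hlog, hlf⟩)
    · intro p hp
      exact (hMemIff p).mp hp
  have hmap : Continuous (fun s : ℝ => (fun i => q i + s * k i : Fin n → ℝ)) := by
    apply continuous_pi
    intro i
    exact continuous_const.add (continuous_id.mul continuous_const)
  have hΓ : IsPreconnected
      ((fun s : ℝ => (fun i => q i + s * k i : Fin n → ℝ)) '' Set.Icc 0 r) :=
    isPreconnected_Icc.image _ hmap.continuousOn
  have hΓsub : ((fun s : ℝ => (fun i => q i + s * k i : Fin n → ℝ)) '' Set.Icc 0 r) ⊆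
      amoebaᶜ := by
    rintro _ ⟨s, hs, rfl⟩
    exact hseg s hs
  have hqΓ : q ∈ ((fun s : ℝ => (fun i => q i + s * k i : Fin n → ℝ)) '' Set.Icc 0 r) :=
    ⟨0, ⟨le_refl 0, hr⟩, by funext i; simp⟩
  have hΓE : ((fun s : ℝ => (fun i => q i + s * k i : Fin n → ℝ)) '' Set.Icc 0 r) ⊆
      connectedComponentIn amoebaᶜ q := hΓ.subset_connectedComponentIn hqΓ hΓsub
  intro s hs
  rw [← hEq]
  exact hΓE ⟨s, hs, rfl⟩
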